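/- Let μ⁽¹⁾, …, μ⁽ᴺ⁾ be probability measures on a compact set 𝒳 ⊂ ℝ^d with finite second moments and let μ̄ = (1/N) ∑ᵢ μ⁽ⁱ⁾ be their mean measure. Then for any distinct points x₁, …, x_K with associated Voronoï partition (Uₖ)ₖ, the average (1/N) ∑ᵢ W₂²( ∑ₖ μ⁽ⁱ⁾(Uₖ) δ_{xₖ}, μ⁽ⁱ⁾ ) equals W₂²( ∑ₖ μ̄(Uₖ) δ_{xₖ}, μ̄ ). In particular, minimizing over weight vectors and locations the average Wasserstein quantization error of the N measures with common support of size K is equivalent to the K-point optimal quantization of the mean measure μ̄. -/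

import Mathlib

open MeasureTheory Set
open scoped ENNReal

noncomputable def W2sq {E : Type*} [MeasurableSpace E] [PseudoMetricSpace E]
    (μ ν : Measure E) : ℝ≥0∞ :=
  ⨅ π : {π : Measure (E × E) // π.map Prod.fst = μ ∧ π.map Prod.snd = ν},
    ∫⁻ p, ENNReal.ofReal (dist p.1 p.2 ^ 2) ∂(π : Measure (E × E))

lemma W2sq_quant_key {d K : ℕ} (hK : 0 < K)
    (x : Fin K → EuclideanSpace ℝ (Fin d))
    (U : Fin K → Set (EuclideanSpace ℝ (Fin d)))
    (hUmeas : ∀ k, MeasurableSet (U k))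
    (hUcover : (⋃ k, U k) = univ)
    (hUdisj : Pairwise (Function.onFun Disjoint U))
    (hUvor : ∀ k, ∀ y ∈ U k, ∀ j, ‖x k - y‖ ≤ ‖x j - y‖)
    (μ : Measure (EuclideanSpace ℝ (Fin d))) :
    W2sq (∑ k, μ (U k) • Measure.dirac (x k)) μ =
      ∫⁻ y, ⨅ k, ENNReal.ofReal (dist (x k) y ^ 2) ∂μ := by
  haveI : Nonempty (Fin K) := ⟨⟨0, hK⟩⟩
  have hg : Measurable fun y : EuclideanSpace ℝ (Fin d) =>
      ⨅ k, ENNReal.ofReal (dist (x k) y ^ 2) :=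
    Measurable.iInf fun k =>
      (((continuous_const.dist continuous_id).pow 2).measurable).ennreal_ofReal
  have hcost : Measurable fun p : EuclideanSpace ℝ (Fin d) × EuclideanSpace ℝ (Fin d) =>
      ENNReal.ofReal (dist p.1 p.2 ^ 2) :=
    (((continuous_fst.dist continuous_snd).pow 2).measurable).ennreal_ofReal
  have hex : ∀ y : EuclideanSpace ℝ (Fin d), ∃ k, y ∈ U k := fun y =>
    mem_iUnion.1 (hUcover ▸ mem_univ y)
  set κ : EuclideanSpace ℝ (Fin d) → Fin K := fun y => (hex y).choose with hκ_def
  have hκU : ∀ y, y ∈ U (κ y) := fun y => (hex y).choose_spec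
  have huniq : ∀ y k, y ∈ U k → κ y = k := by
    intro y k hk
    by_contra h
    exact (Set.disjoint_left.mp (hUdisj h)) (hκU y) hk
  have hκmeas : Measurable κ := by
    apply measurable_to_countable'
    intro k
    have : κ ⁻¹' {k} = U k := by
      ext y
      constructor
      · intro h
        have h' : κ y = k := h
        exact h' ▸ hκU y
      · intro h
        exact huniq y k h
    rw [this]; exact hUmeas k
  set T : EuclideanSpace ℝ (Fin d) → EuclideanSpace ℝ (Fin d) := fun y => x (κ y) with hT_def
  have hT : Measurable T := (measurable_of_countable x).comp hκmeas
  have hpair : Measurable fun y : EuclideanSpace ℝ (Fin d) => (T y, y) :=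
    hT.prodMk measurable_id
  set π₀ : Measure (EuclideanSpace ℝ (Fin d) × EuclideanSpace ℝ (Fin d)) :=
    μ.map (fun y => (T y, y)) with hπ₀_def
  have h1 : π₀.map Prod.fst = ∑ k, μ (U k) • Measure.dirac (x k) := by
    rw [hπ₀_def, Measure.map_map measurable_fst hpair]
    have heq : (Prod.fst ∘ fun y : EuclideanSpace ℝ (Fin d) => (T y, y)) = T := rfl
    rw [heq]
    ext s hs
    rw [Measure.map_apply hT hs, Measure.finset_sum_apply]
    have hTs : T ⁻¹' s = ⋃ k, U k ∩ {y : EuclideanSpace ℝ (Fin d) | x k ∈ s} := by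
      ext y
      simp only [mem_preimage, mem_iUnion, mem_inter_iff, mem_setOf_eq]
      constructor
      · intro h
        exact ⟨κ y, hκU y, h⟩
      · rintro ⟨k, hky, hks⟩
        show x (κ y) ∈ s
        rwa [huniq y k hky]
    rw [hTs, measure_iUnion, tsum_fintype]
    · apply Finset.sum_congr rfl
      intro k _
      rw [Measure.smul_apply, Measure.dirac_apply' _ hs]
      by_cases h : x k ∈ s
      · simp [h]
      · simp [h]
    · intro j k hjk
      exact (hUdisj hjk).mono inter_subset_left inter_subset_left
    · intro k
      refine (hUmeas k).inter ?_
      by_cases h : x k ∈ s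
      · simp [h]
      · simp [h]
  have h2 : π₀.map Prod.snd = μ := by
    rw [hπ₀_def, Measure.map_map measurable_snd hpair]
    have heq : (Prod.snd ∘ fun y : EuclideanSpace ℝ (Fin d) => (T y, y)) = id := rfl
    rw [heq, Measure.map_id]
  apply le_antisymm
  · calc W2sq (∑ k, μ (U k) • Measure.dirac (x k)) μ
        ≤ ∫⁻ p, ENNReal.ofReal (dist p.1 p.2 ^ 2) ∂π₀ := iInf_le (fun π : {π : Measure (EuclideanSpace ℝ (Fin d) × EuclideanSpace ℝ (Fin d)) // π.map Prod.fst = ∑ k, μ (U k) • Measure.dirac (x k) ∧ π.map Prod.snd = μ} => ∫⁻ p, ENNReal.ofReal (dist p.1 p.2 ^ 2) ∂(π : Measure (EuclideanSpace ℝ (Fin d) × EuclideanSpace ℝ (Fin d)))) ⟨π₀, h1, h2⟩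
      _ = ∫⁻ y, ENNReal.ofReal (dist (T y) y ^ 2) ∂μ := by
          rw [hπ₀_def, lintegral_map hcost hpair]
      _ ≤ ∫⁻ y, ⨅ k, ENNReal.ofReal (dist (x k) y ^ 2) ∂μ := by
          apply lintegral_mono
          intro y
          refine le_iInf fun j => ENNReal.ofReal_le_ofReal ?_
          have h1' := hUvor (κ y) y (hκU y) j
          rw [dist_eq_norm, dist_eq_norm]
          exact pow_le_pow_left₀ (norm_nonneg _) h1' 2
  · refine le_iInf ?_
    rintro ⟨π, hfst, hsnd⟩
    have hAmeas : MeasurableSet (Set.range x) := (Set.finite_range x).measurableSet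
    have hA : π (Prod.fst ⁻¹' (Set.range x)ᶜ) = 0 := by
      have h := congrArg (fun m : Measure (EuclideanSpace ℝ (Fin d)) => m (Set.range x)ᶜ) hfst
      simp only [Measure.map_apply measurable_fst hAmeas.compl] at h
      rw [h, Measure.finset_sum_apply]
      apply Finset.sum_eq_zero
      intro k _
      have hmem : x k ∈ Set.range x := ⟨k, rfl⟩
      rw [Measure.smul_apply, Measure.dirac_apply' _ hAmeas.compl,
        indicator_of_notMem (by simpa using hmem), smul_zero]
    have hae : ∀ᵐ p ∂π, p.1 ∈ Set.range x := by
      rw [ae_iff]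
      exact hA
    show (∫⁻ y, ⨅ k, ENNReal.ofReal (dist (x k) y ^ 2) ∂μ) ≤
      ∫⁻ p, ENNReal.ofReal (dist p.1 p.2 ^ 2) ∂π
    have heq : (∫⁻ y, ⨅ k, ENNReal.ofReal (dist (x k) y ^ 2) ∂μ) =
        ∫⁻ p, ⨅ k, ENNReal.ofReal (dist (x k) p.2 ^ 2) ∂π := by
      rw [← hsnd, lintegral_map hg measurable_snd]
    rw [heq]
    apply lintegral_mono_ae
    filter_upwards [hae] with p hp
    obtain ⟨k, hk⟩ := hp
    calc (⨅ j, ENNReal.ofReal (dist (x j) p.2 ^ 2))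
        ≤ ENNReal.ofReal (dist (x k) p.2 ^ 2) := iInf_le _ k
      _ = ENNReal.ofReal (dist p.1 p.2 ^ 2) := by rw [hk]

/-- for probability measures `μ⁽¹⁾,…,μ⁽ᴺ⁾` supported in a compact set
`𝒳 ⊂ ℝ^d` and any distinct points `x₁,…,x_K` with Voronoï partition `(Uₖ)`, the average
quantization error `(1/N) ∑ᵢ W₂²(∑ₖ μ⁽ⁱ⁾(Uₖ) δ_{xₖ}, μ⁽ⁱ⁾)` equals the quantization error
`W₂²(∑ₖ μ̄(Uₖ) δ_{xₖ}, μ̄)` of the mean measure `μ̄ = (1/N) ∑ᵢ μ⁽ⁱ⁾`. -/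
theorem stmt_4 {d : ℕ} (N K : ℕ) (hN : 0 < N) (hK : 0 < K)
    (𝒳 : Set (EuclideanSpace ℝ (Fin d))) (hcomp : IsCompact 𝒳)
    (μ : Fin N → Measure (EuclideanSpace ℝ (Fin d)))
    (hprob : ∀ i, IsProbabilityMeasure (μ i))
    (hsupp : ∀ i, μ i 𝒳ᶜ = 0)
    (μbar : Measure (EuclideanSpace ℝ (Fin d)))
    (hμbar : μbar = (N : ℝ≥0∞)⁻¹ • ∑ i, μ i)
    (x : Fin K → EuclideanSpace ℝ (Fin d)) (hx : Function.Injective x)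
    (U : Fin K → Set (EuclideanSpace ℝ (Fin d)))
    (hUmeas : ∀ k, MeasurableSet (U k))
    (hUcover : (⋃ k, U k) = univ)
    (hUdisj : Pairwise (Function.onFun Disjoint U))
    (hUvor : ∀ k, ∀ y ∈ U k, ∀ j, ‖x k - y‖ ≤ ‖x j - y‖) :
    (N : ℝ≥0∞)⁻¹ * ∑ i, W2sq (∑ k, (μ i) (U k) • Measure.dirac (x k)) (μ i) =
      W2sq (∑ k, μbar (U k) • Measure.dirac (x k)) μbar := by
  have key := fun ν => W2sq_quant_key hK x U hUmeas hUcover hUdisj hUvor ν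
  rw [key μbar, hμbar]
  conv_lhs => rw [Finset.sum_congr rfl (fun i _ => key (μ i))]
  rw [lintegral_smul_measure, lintegral_finset_sum_measure]
  rfl
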